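/- (Abstract substructuring identity) Let V, 𝕍, S, 𝕊 be finite-dimensional real inner product spaces, 𝒜 : V → V and L : 𝕍 → 𝕍 self-adjoint positive definite, ℛ : V → 𝕍 injective linear with 𝒜 = ℛᵀ L ℛ, ℬ : V → S surjective linear, B : 𝕍 → 𝕊 surjective linear, and R : S → 𝕊 injective linear, such that B ∘ ℛ = R ∘ ℬ. Assume further that for every w ∈ 𝕍 with B(w) ∈ range(R) one has w ∈ range(ℛ). Define T⁻¹ := B L⁻¹ Bᵀ (so T = (B L⁻¹ Bᵀ)⁻¹ : 𝕊 → 𝕊). Then Rᵀ T R : S → S is invertible and (Rᵀ T R)⁻¹ = ℬ 𝒜⁻¹ ℬᵀ. -/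

import Mathlib

/-- abstract substructuring identity: With `𝒜 = ℛᵀ L ℛ`, `B ∘ ℛ = R ∘ ℬ`,
`ℬ, B` surjective, `ℛ, R` injective, the conformity condition
`B w ∈ range R → w ∈ range ℛ`, and `T := (B L⁻¹ Bᵀ)⁻¹` the Schur complement, the
operator `Rᵀ T R` is invertible with inverse `ℬ 𝒜⁻¹ ℬᵀ`. -/
theorem stmt9
    {V 𝕍 S 𝕊 : Type*}
    [NormedAddCommGroup V] [InnerProductSpace ℝ V] [FiniteDimensional ℝ V]
    [NormedAddCommGroup 𝕍] [InnerProductSpace ℝ 𝕍] [FiniteDimensional ℝ 𝕍]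
    [NormedAddCommGroup S] [InnerProductSpace ℝ S] [FiniteDimensional ℝ S]
    [NormedAddCommGroup 𝕊] [InnerProductSpace ℝ 𝕊] [FiniteDimensional ℝ 𝕊]
    (𝒜 : V →ₗ[ℝ] V) (L : 𝕍 →ₗ[ℝ] 𝕍)
    (h𝒜sa : LinearMap.adjoint 𝒜 = 𝒜)
    (h𝒜pos : ∀ u : V, u ≠ 0 → (0 : ℝ) < inner ℝ (𝒜 u) u)
    (hLsa : LinearMap.adjoint L = L)
    (hLpos : ∀ u : 𝕍, u ≠ 0 → (0 : ℝ) < inner ℝ (L u) u)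
    (ℛ : V →ₗ[ℝ] 𝕍) (hℛ : Function.Injective ℛ)
    (h𝒜 : 𝒜 = LinearMap.adjoint ℛ ∘ₗ L ∘ₗ ℛ)
    (ℬ : V →ₗ[ℝ] S) (hℬ : Function.Surjective ℬ)
    (B : 𝕍 →ₗ[ℝ] 𝕊) (hB : Function.Surjective B)
    (R : S →ₗ[ℝ] 𝕊) (hR : Function.Injective R)
    (hComm : B ∘ₗ ℛ = R ∘ₗ ℬ)
    (hConf : ∀ w : 𝕍, B w ∈ LinearMap.range R → w ∈ LinearMap.range ℛ)
    (Linv : 𝕍 →ₗ[ℝ] 𝕍)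
    (hL1 : L ∘ₗ Linv = LinearMap.id) (hL2 : Linv ∘ₗ L = LinearMap.id)
    (𝒜inv : V →ₗ[ℝ] V)
    (h𝒜1 : 𝒜 ∘ₗ 𝒜inv = LinearMap.id) (h𝒜2 : 𝒜inv ∘ₗ 𝒜 = LinearMap.id)
    (T : 𝕊 →ₗ[ℝ] 𝕊)
    (hT1 : T ∘ₗ (B ∘ₗ Linv ∘ₗ LinearMap.adjoint B) = LinearMap.id)
    (hT2 : (B ∘ₗ Linv ∘ₗ LinearMap.adjoint B) ∘ₗ T = LinearMap.id) :
    (LinearMap.adjoint R ∘ₗ T ∘ₗ R) ∘ₗ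
        (ℬ ∘ₗ 𝒜inv ∘ₗ LinearMap.adjoint ℬ) = LinearMap.id ∧
    (ℬ ∘ₗ 𝒜inv ∘ₗ LinearMap.adjoint ℬ) ∘ₗ
        (LinearMap.adjoint R ∘ₗ T ∘ₗ R) = LinearMap.id := by

  -- ℬᵀ is injective since ℬ is surjective
  have hℬadj : Function.Injective (LinearMap.adjoint ℬ) := by
    intro a b hab
    rw [← sub_eq_zero, ← map_sub] at hab
    rw [← sub_eq_zero]
    obtain ⟨v, hv⟩ := hℬ (a - b)
    have h0 : (inner ℝ (a - b) (a - b) : ℝ) = 0 := by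
      calc (inner ℝ (a - b) (a - b) : ℝ) = inner ℝ (a - b) (ℬ v) := by rw [hv]
        _ = inner ℝ ((LinearMap.adjoint ℬ) (a - b)) v :=
            (LinearMap.adjoint_inner_left ℬ v (a - b)).symm
        _ = 0 := by rw [hab, inner_zero_left]
    exact inner_self_eq_zero.mp h0
  have hadjComm : (LinearMap.adjoint ℛ) ∘ₗ (LinearMap.adjoint B)
      = (LinearMap.adjoint ℬ) ∘ₗ (LinearMap.adjoint R) := by
    rw [← LinearMap.adjoint_comp, ← LinearMap.adjoint_comp, hComm]
  have key : ∀ μ : S,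
      (LinearMap.adjoint R) (T (R (ℬ (𝒜inv ((LinearMap.adjoint ℬ) μ))))) = μ := by
    intro μ
    set u : V := 𝒜inv ((LinearMap.adjoint ℬ) μ) with hu
    set lam : 𝕊 := T (R (ℬ u)) with hlam
    have hAu : 𝒜 u = (LinearMap.adjoint ℬ) μ := by
      have := congrArg (fun f : V →ₗ[ℝ] V => f ((LinearMap.adjoint ℬ) μ)) h𝒜1
      simpa [LinearMap.comp_apply] using this
    set z : 𝕍 := Linv ((LinearMap.adjoint B) lam) with hz
    have hBz : B z = R (ℬ u) := by
      have := congrArg (fun f : 𝕊 →ₗ[ℝ] 𝕊 => f (R (ℬ u))) hT2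
      simpa [LinearMap.comp_apply, hz, hlam] using this
    obtain ⟨x, hx⟩ := hConf z (by rw [hBz]; exact ⟨ℬ u, rfl⟩)
    have hLz : L z = (LinearMap.adjoint B) lam := by
      have := congrArg (fun f : 𝕍 →ₗ[ℝ] 𝕍 => f ((LinearMap.adjoint B) lam)) hL1
      simpa [LinearMap.comp_apply, hz] using this
    have hAx : 𝒜 x = (LinearMap.adjoint ℬ) ((LinearMap.adjoint R) lam) := by
      have h1 : 𝒜 x = (LinearMap.adjoint ℛ) ((LinearMap.adjoint B) lam) := by
        rw [h𝒜]; simp only [LinearMap.comp_apply, hx, hLz]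
      rw [h1]
      have := congrArg (fun f : 𝕊 →ₗ[ℝ] V => f lam) hadjComm
      simpa [LinearMap.comp_apply] using this
    have hbx : ℬ x = ℬ u := by
      apply hR
      have h1 : B (ℛ x) = R (ℬ x) := by
        have := congrArg (fun f : V →ₗ[ℝ] 𝕊 => f x) hComm
        simpa [LinearMap.comp_apply] using this
      rw [← h1, hx, hBz]
    have hxu : x = u := by
      by_contra h
      have hd : x - u ≠ 0 := sub_ne_zero.mpr h
      have hz0 : (inner ℝ (𝒜 (x - u)) (x - u) : ℝ) = 0 := by
        rw [map_sub, hAx, hAu, ← map_sub, LinearMap.adjoint_inner_left,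
          map_sub, hbx, sub_self, inner_zero_right]
      exact absurd hz0 (ne_of_gt (h𝒜pos _ hd))
    have hfin : (LinearMap.adjoint ℬ) ((LinearMap.adjoint R) lam)
        = (LinearMap.adjoint ℬ) μ := by rw [← hAx, hxu, hAu]
    exact hℬadj hfin
  have h1 : (LinearMap.adjoint R ∘ₗ T ∘ₗ R) ∘ₗ
      (ℬ ∘ₗ 𝒜inv ∘ₗ LinearMap.adjoint ℬ) = LinearMap.id := by
    ext μ
    simpa [LinearMap.comp_apply] using key μ
  refine ⟨h1, ?_⟩
  have h1' : (LinearMap.adjoint R ∘ₗ T ∘ₗ R) *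
      (ℬ ∘ₗ 𝒜inv ∘ₗ LinearMap.adjoint ℬ) = 1 := by
    rw [Module.End.mul_eq_comp, h1]; rfl
  have h2 := mul_eq_one_comm.mp h1'
  rw [Module.End.mul_eq_comp] at h2
  exact h2
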